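/- arXiv:cs/0110040 — 2 statements merged into one kernel-verified Lean document; each statement's English description precedes it below -/
import Mathlib

section
/- For each constant c, there are only finitely many one-way infinite binary sequences ω such that for all n, C(ω_{1:n}) ≤ log n + c; in fact their number is bounded by 2^{c + O(1)}. -/
/-- Plain conditional Kolmogorov complexity `C(x|y)` relative to the machine `φ`:
the length of a shortest program `p` with `φ p y = x`. -/
noncomputable def kolC (φ : List Bool → List Bool → Part (List Bool)) (x y : List Bool) : ℕ :=
  sInf {n | ∃ p : List Bool, p.length = n ∧ x ∈ φ p y}

/-- Unconditional Kolmogorov complexity `C(x) = C(x|ε)`. -/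
noncomputable def kolCp (φ : List Bool → List Bool → Part (List Bool)) (x : List Bool) : ℕ :=
  kolC φ x []

/-- `φ` is a universal partial computable function: it is partial computable and
simulates every partial computable `ψ` with at most constant overhead in program length. -/
def IsUniversal (φ : List Bool → List Bool → Part (List Bool)) : Prop :=
  Partrec₂ φ ∧ ∀ ψ : List Bool → List Bool → Part (List Bool), Partrec₂ ψ →
    ∃ c : ℕ, ∀ p y x, x ∈ ψ p y → ∃ q : List Bool, x ∈ φ q y ∧ q.length ≤ p.length + c

/-- The `k`-th binary string in length-lexicographic order; `(natToStr n).length` is the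
binary length `log n` of the number `n`. -/
def natToStr (n : ℕ) : List Bool := (Nat.bits (n + 1)).reverse.tail

/-- Bijective base-2 value of a string (shifted): an injection `List Bool → ℕ`. -/
private def strVal : List Bool → ℕ
  | [] => 0
  | b :: t => 2 * strVal t + (if b then 2 else 1)

private lemma strVal_bound : ∀ p : List Bool, strVal p + 2 ≤ 2 ^ (p.length + 1) := by
  intro p
  induction p with
  | nil => simp [strVal]
  | cons b t ih =>
    simp only [strVal, List.length_cons]
    have : (2:ℕ) ^ (t.length + 1 + 1) = 2 * 2 ^ (t.length + 1) := by ring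
    rw [this]
    cases b <;> simp <;> omega

private lemma strVal_inj : ∀ p q : List Bool, strVal p = strVal q → p = q := by
  intro p
  induction p with
  | nil =>
    intro q h
    cases q with
    | nil => rfl
    | cons b t => cases b <;> simp [strVal] at h
  | cons b t ih =>
    intro q h
    cases q with
    | nil => cases b <;> simp [strVal] at h
    | cons b' t' =>
      have ht : strVal t = strVal t' ∧ b = b' := by
        cases b <;> cases b' <;> simp [strVal] at h ⊢ <;> omega
      rw [ht.2, ih t' ht.1]

private lemma prefix_eq {x y : ℕ → Bool} {m i : ℕ}
    (h : (List.range m).map x = (List.range m).map y) (hi : i < m) : x i = y i := by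
  have := congrArg (fun l => l[i]?) h
  simpa [List.getElem?_map, List.getElem?_range, hi] using this

private lemma natToStr_len {n k i : ℕ} (hn : n = 2 ^ k + i) (hi : i < 2 ^ k) :
    (natToStr n).length ≤ k + 1 := by
  have h1 : (natToStr n).length = (n + 1).bits.length - 1 := by simp [natToStr]
  rw [h1, Nat.size_eq_bits_len]
  have hsz : (n + 1).size ≤ k + 2 := Nat.size_le.mpr (by
    have h2 : (2:ℕ) ^ k + 2 ^ k ≤ 2 ^ (k + 1) := by ring_nf; omega
    have h3 : (2:ℕ) ^ (k + 1) < 2 ^ (k + 2) := by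
      have := Nat.one_le_two_pow (n := k + 1); ring_nf; omega
    omega)
  omega

/-- For each constant `c` there are only finitely many infinite binary sequences `ω` with
`C(ω_{1:n}) ≤ log n + c` for all `n`; in fact their number is at most `2^{c+O(1)}`. -/
theorem finitely_many_logcompressible (φ : List Bool → List Bool → Part (List Bool))
    (hφ : IsUniversal φ) :
    ∃ d : ℕ, ∀ c : ℕ,
      { ω : ℕ → Bool | ∀ n : ℕ,
          kolCp φ ((List.range n).map ω) ≤ (natToStr n).length + c }.Finite ∧
      { ω : ℕ → Bool | ∀ n : ℕ,
          kolCp φ ((List.range n).map ω) ≤ (natToStr n).length + c }.ncard ≤ 2 ^ (c + d) := by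
  classical
  -- every string has some program, by universality applied to the printing machine
  obtain ⟨-, huniv⟩ := hφ
  have hprint : Partrec₂ (fun (p : List Bool) (_ : List Bool) => (Part.some p)) := by
    have h : Computable₂ (fun (p : List Bool) (_ : List Bool) => p) :=
      Computable.to₂ Computable.fst
    exact h.partrec₂
  obtain ⟨c0, hc0⟩ := huniv _ hprint
  have hex : ∀ x : List Bool, ∃ p, x ∈ φ p [] := by
    intro x
    obtain ⟨q, hq, -⟩ := hc0 x [] x (Part.mem_some x)
    exact ⟨q, hq⟩
  -- a short description really exists
  have hspec : ∀ (x : List Bool) (L : ℕ), kolCp φ x ≤ L →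
      ∃ p : List Bool, p.length ≤ L ∧ x ∈ φ p [] := by
    intro x L hL
    have hne : {n | ∃ p : List Bool, p.length = n ∧ x ∈ φ p []}.Nonempty := by
      obtain ⟨p, hp⟩ := hex x
      exact ⟨p.length, p, rfl, hp⟩
    obtain ⟨p, hp, hmem⟩ := Nat.sInf_mem hne
    exact ⟨p, by rw [hp]; exact hL, hmem⟩
  -- counting: a set of strings all having programs of length ≤ L has at most 2^(L+1) elements
  have hcount : ∀ (s : Set (List Bool)) (L : ℕ),
      (∀ x ∈ s, ∃ p : List Bool, p.length ≤ L ∧ x ∈ φ p []) →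
      s.Finite ∧ s.ncard ≤ 2 ^ (L + 1) := by
    intro s L hs
    set g : List Bool → ℕ := fun x =>
      if h : ∃ p : List Bool, p.length ≤ L ∧ x ∈ φ p [] then strVal h.choose else 0 with hg
    have hinj : Set.InjOn g s := by
      intro x hx y hy hxy
      have hx' := hs x hx
      have hy' := hs y hy
      rw [hg] at hxy
      simp only [dif_pos hx', dif_pos hy'] at hxy
      have hpq := strVal_inj _ _ hxy
      exact Part.mem_unique hx'.choose_spec.2 (hpq ▸ hy'.choose_spec.2)
    have hmaps : ∀ x ∈ s, g x ∈ Set.Iio (2 ^ (L + 1)) := by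
      intro x hx
      have hx' := hs x hx
      rw [hg]
      simp only [dif_pos hx', Set.mem_Iio]
      have h1 := strVal_bound hx'.choose
      have h2 := hx'.choose_spec.1
      have h3 : (2:ℕ) ^ (hx'.choose.length + 1) ≤ 2 ^ (L + 1) :=
        Nat.pow_le_pow_right (by norm_num) (by omega)
      omega
    have hIio : (Set.Iio (2 ^ (L + 1))).Finite := Set.finite_Iio _
    have hfin : s.Finite :=
      Set.Finite.of_finite_image (hIio.subset (Set.image_subset_iff.mpr hmaps)) hinj
    refine ⟨hfin, ?_⟩
    have := Set.ncard_le_ncard_of_injOn g hmaps hinj hIio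
    rwa [← Finset.coe_range, Set.ncard_coe_finset, Finset.card_range] at this
  refine ⟨2, fun c => ?_⟩
  set S : Set (ℕ → Bool) :=
    { ω : ℕ → Bool | ∀ n : ℕ,
        kolCp φ ((List.range n).map ω) ≤ (natToStr n).length + c } with hS
  -- the prefix sets of S at length 2^k have at most 2^(c+2) elements
  have hA : ∀ k : ℕ,
      ((fun ω : ℕ → Bool => (List.range (2 ^ k)).map ω) '' S).Finite ∧
      ((fun ω : ℕ → Bool => (List.range (2 ^ k)).map ω) '' S).ncard ≤ 2 ^ (c + 2) := by
    intro k
    set A := (fun ω : ℕ → Bool => (List.range (2 ^ k)).map ω) '' S with hAdef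
    set B := {x : List Bool | ∃ ω ∈ S, ∃ i < 2 ^ k, x = (List.range (2 ^ k + i)).map ω} with hBdef
    have hB : B.Finite ∧ B.ncard ≤ 2 ^ (k + 1 + c + 1) := by
      apply hcount
      rintro x ⟨ω, hω, i, hi, rfl⟩
      apply hspec
      calc kolCp φ ((List.range (2 ^ k + i)).map ω)
          ≤ (natToStr (2 ^ k + i)).length + c := hω _
        _ ≤ (k + 1) + c := by
            have := natToStr_len (n := 2 ^ k + i) rfl hi
            omega
        _ = k + 1 + c := rfl
    have hAB : A ⊆ B := by
      rintro a ⟨ω, hω, rfl⟩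
      exact ⟨ω, hω, 0, Nat.two_pow_pos k, by simp⟩
    have hAfin : A.Finite := hB.1.subset hAB
    refine ⟨hAfin, ?_⟩
    -- the extension map: a pair (prefix, offset) maps to a longer prefix in B
    set h : List Bool × ℕ → List Bool := fun q =>
      if hq : ∃ ω ∈ S, (List.range (2 ^ k)).map ω = q.1
      then (List.range (2 ^ k + q.2)).map hq.choose else [] with hh
    have hmaps : ∀ q ∈ A ×ˢ Set.Iio (2 ^ k), h q ∈ B := by
      rintro ⟨a, i⟩ ⟨ha, hi⟩
      have ha' : ∃ ω ∈ S, (List.range (2 ^ k)).map ω = a := by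
        obtain ⟨ω, hω, hωa⟩ := ha
        exact ⟨ω, hω, hωa⟩
      rw [hh]
      simp only [dif_pos ha']
      exact ⟨ha'.choose, ha'.choose_spec.1, i, hi, rfl⟩
    have hinj : Set.InjOn h (A ×ˢ Set.Iio (2 ^ k)) := by
      rintro ⟨a, i⟩ ⟨ha, hi⟩ ⟨a', i'⟩ ⟨ha', hi'⟩ heq
      have hae : ∃ ω ∈ S, (List.range (2 ^ k)).map ω = a := by
        obtain ⟨ω, hω, hωa⟩ := ha; exact ⟨ω, hω, hωa⟩
      have hae' : ∃ ω ∈ S, (List.range (2 ^ k)).map ω = a' := by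
        obtain ⟨ω, hω, hωa⟩ := ha'; exact ⟨ω, hω, hωa⟩
      rw [hh] at heq
      simp only [dif_pos hae, dif_pos hae'] at heq
      have hlen := congrArg List.length heq
      simp only [List.length_map, List.length_range] at hlen
      have hii : i = i' := by omega
      subst hii
      have htake := congrArg (List.take (2 ^ k)) heq
      have ht : ∀ (f : ℕ → Bool), ((List.range (2 ^ k + i)).map f).take (2 ^ k)
          = (List.range (2 ^ k)).map f := by
        intro f
        rw [← List.map_take, List.take_range, Nat.min_eq_left (by omega)]
      rw [ht, ht, hae.choose_spec.2, hae'.choose_spec.2] at htake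
      simp [htake]
    have hprod := Set.ncard_le_ncard_of_injOn h hmaps hinj hB.1
    have hprodcard : (A ×ˢ Set.Iio (2 ^ k)).ncard = A.ncard * 2 ^ k := by
      rw [← Nat.card_coe_set_eq, Nat.card_congr (Equiv.Set.prod _ _), Nat.card_prod,
        Nat.card_coe_set_eq, Nat.card_coe_set_eq]
      rw [← Finset.coe_range, Set.ncard_coe_finset, Finset.card_range]
    have hBle : B.ncard ≤ 2 ^ (k + 1 + c + 1) := hB.2
    have hkey : A.ncard * 2 ^ k ≤ 2 ^ (c + 2) * 2 ^ k := by
      calc A.ncard * 2 ^ k = (A ×ˢ Set.Iio (2 ^ k)).ncard := hprodcard.symm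
        _ ≤ B.ncard := hprod
        _ ≤ 2 ^ (k + 1 + c + 1) := hBle
        _ = 2 ^ (c + 2) * 2 ^ k := by rw [← pow_add]; ring_nf
    exact Nat.le_of_mul_le_mul_right hkey (Nat.two_pow_pos k)
  -- no finite subset of S has more than 2^(c+2) elements
  have key : ∀ F : Finset (ℕ → Bool), ↑F ⊆ S → F.card ≤ 2 ^ (c + 2) := by
    intro F hF
    set g : (ℕ → Bool) × (ℕ → Bool) → ℕ := fun q =>
      if h : ∃ n, q.1 n ≠ q.2 n then h.choose else 0 with hg
    obtain ⟨N, hN⟩ : ∃ N, ∀ q ∈ F ×ˢ F, g q ≤ N :=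
      ⟨(F ×ˢ F).sup g, fun q hq => Finset.le_sup hq⟩
    set k := N + 1 with hk
    have hNk : N < 2 ^ k := lt_of_lt_of_le (Nat.lt_two_pow_self (n := N))
      (Nat.pow_le_pow_right (by norm_num) (by omega))
    have hinj : Set.InjOn (fun ω : ℕ → Bool => (List.range (2 ^ k)).map ω) ↑F := by
      intro x hx y hy hxy
      by_contra hne
      have hex' : ∃ n, x n ≠ y n := Function.ne_iff.mp hne
      have hgb : g (x, y) ≤ N := hN (x, y) (Finset.mem_product.mpr ⟨hx, hy⟩)
      rw [hg] at hgb
      simp only [dif_pos hex'] at hgb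
      exact hex'.choose_spec (prefix_eq hxy (by omega))
    have hmaps : ∀ ω ∈ (↑F : Set (ℕ → Bool)),
        (fun ω : ℕ → Bool => (List.range (2 ^ k)).map ω) ω ∈
          ((fun ω : ℕ → Bool => (List.range (2 ^ k)).map ω) '' S) :=
      fun ω hω => ⟨ω, hF hω, rfl⟩
    have := Set.ncard_le_ncard_of_injOn _ hmaps hinj (hA k).1
    rw [Set.ncard_coe_finset] at this
    exact this.trans (hA k).2
  have hSfin : S.Finite := by
    by_contra hinf
    have hinf' : S.Infinite := hinf
    obtain ⟨F, hF, hcard⟩ := hinf'.exists_subset_card_eq (2 ^ (c + 2) + 1)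
    have := key F hF
    omega
  have hScard : S.ncard ≤ 2 ^ (c + 2) := by
    have := key hSfin.toFinset (by simp)
    rwa [Set.ncard_eq_toFinset_card S hSfin]
  exact ⟨hSfin, hScard⟩
end

section
/- If L ⊆ Σ* is recursively enumerable, then there is a constant c_L such that for all n, C(λ_{1:n} | n) ≤ log n + c_L, where λ is the characteristic sequence of L. -/
open Classical in
/-- The length-`n` prefix `λ_{1:n}` of the characteristic sequence of `L`. -/
noncomputable def lamPrefix (L : Language Bool) (n : ℕ) : List Bool :=
  (List.range n).map fun i => if natToStr i ∈ L then true else false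

/-! ### Auxiliary development for Barzdin's theorem -/

section Barzdin

open Nat.Partrec (Code)
open Nat.Partrec.Code

/-- little-endian value of a bit string -/
def valLE : List Bool → ℕ
  | [] => 0
  | b :: l => b.toNat + 2 * valLE l

lemma bits_eq (n : ℕ) (hn : n ≠ 0) : n.bits = n.bodd :: n.div2.bits := by
  conv_lhs => rw [← Nat.bit_bodd_div2 n]
  apply Nat.bits_append_bit
  intro h
  cases hb : n.bodd
  · exfalso; apply hn
    have h2 := Nat.bodd_add_div2 n
    rw [hb, h] at h2; simpa using h2.symm
  · rfl

lemma valLE_bits (n : ℕ) : valLE n.bits = n := by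
  induction n using Nat.strong_induction_on with
  | _ n ih =>
    rcases eq_or_ne n 0 with rfl | hn
    · simp [Nat.zero_bits, valLE]
    · rw [bits_eq n hn, valLE, ih _ (Nat.binaryRec_decreasing hn)]
      have := Nat.bodd_add_div2 n
      omega

lemma bits_concat (n : ℕ) (hn : n ≠ 0) : ∃ l, n.bits = l ++ [true] := by
  induction n using Nat.strong_induction_on with
  | _ n ih =>
    rcases eq_or_ne n.div2 0 with h0 | h0
    · have hb : n.bodd = true := by
        cases hb : n.bodd
        · exfalso; apply hn; have h2 := Nat.bodd_add_div2 n; rw [hb, h0] at h2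
          simpa using h2.symm
        · rfl
      exact ⟨[], by rw [bits_eq n hn, hb, h0, Nat.zero_bits]; rfl⟩
    · obtain ⟨l, hl⟩ := ih _ (Nat.binaryRec_decreasing hn) h0
      exact ⟨n.bodd :: l, by rw [bits_eq n hn, hl]; rfl⟩

/-- inverse of `natToStr` -/
def strToNat (s : List Bool) : ℕ := valLE (s.reverse ++ [true]) - 1

lemma bits_eq_natToStr (n : ℕ) : (n+1).bits = (natToStr n).reverse ++ [true] := by
  obtain ⟨l, hl⟩ := bits_concat (n+1) n.succ_ne_zero
  rw [hl]; unfold natToStr; rw [hl]; simp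

lemma strToNat_natToStr (n : ℕ) : strToNat (natToStr n) = n := by
  unfold strToNat
  rw [← bits_eq_natToStr, valLE_bits]; omega

lemma len_natToStr (n : ℕ) : (natToStr n).length + 1 = (n+1).size := by
  rw [← Nat.size_eq_bits_len, bits_eq_natToStr]
  simp

lemma lt_pow_len (n : ℕ) : n < 2 ^ ((natToStr n).length + 1) := by
  rw [len_natToStr]
  have := Nat.lt_size_self (n+1)
  omega

/-- fixed-length little-endian binary representation -/
def toBits : ℕ → ℕ → List Bool
  | 0, _ => []
  | l+1, k => (decide (k % 2 = 1)) :: toBits l (k / 2)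

lemma toBits_length : ∀ l k, (toBits l k).length = l
  | 0, _ => rfl
  | l+1, k => by simp [toBits, toBits_length l]

lemma valLE_toBits : ∀ l k, valLE (toBits l k) = k % 2 ^ l
  | 0, k => by simp [toBits, valLE]; omega
  | l+1, k => by
    rw [toBits, valLE, valLE_toBits l]
    have h1 : (decide (k % 2 = 1)).toNat = k % 2 := by
      rcases Nat.mod_two_eq_zero_or_one k with h | h <;> simp [h]
    rw [h1, pow_succ', Nat.mod_mul]

/-- pointwise boolean implication -/
def Imp : Bool → Bool → Prop := fun x y => x = true → y = true

lemma count_mono : ∀ {a b : List Bool}, List.Forall₂ Imp a b →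
    a.count true ≤ b.count true := by
  intro a b h
  induction h with
  | nil => simp
  | @cons x y l m hxy htl ih =>
    simp only [List.count_cons]
    cases x
    · cases y <;> simp <;> omega
    · rw [hxy rfl]; simpa using ih

lemma eq_of_count : ∀ {a b : List Bool}, List.Forall₂ Imp a b →
    b.count true ≤ a.count true → a = b := by
  intro a b h
  induction h with
  | nil => simp
  | @cons x y l m hxy htl ih =>
    intro hc
    have hml := count_mono htl
    simp only [List.count_cons] at hc
    cases x
    · cases y
      · rw [ih (by omega)]
      · exfalso; simp at hc; omega
    · rw [hxy rfl] at hc ⊢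
      rw [ih (by omega)]

lemma forall2_maps {f g : ℕ → Bool} (h : ∀ i, f i = true → g i = true) (l : List ℕ) :
    List.Forall₂ Imp (l.map f) (l.map g) := by
  induction l with
  | nil => simp
  | cons x l ih => exact List.Forall₂.cons (h x) ih

lemma primrec_bits : Primrec Nat.bits := by
  have h : Primrec₂ (fun (_ : Unit) (n : ℕ) => Nat.bits n) := by
    apply Primrec.nat_strong_rec _
      (g := fun (_ : Unit) (IH : List (List Bool)) =>
        some (if IH.length = 0 then [] else Nat.bodd IH.length :: IH.getD (IH.length / 2) []))
    · apply Primrec.option_some.comp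
      apply Primrec.ite
      · exact PrimrecRel.comp Primrec.eq (Primrec.list_length.comp Primrec.snd) (Primrec.const 0)
      · exact Primrec.const []
      · exact Primrec.list_cons.comp
          (Primrec.nat_bodd.comp (Primrec.list_length.comp Primrec.snd))
          (Primrec.option_getD.comp
            (Primrec.list_getElem?.comp Primrec.snd
              (Primrec.nat_div.comp (Primrec.list_length.comp Primrec.snd) (Primrec.const 2)))
            (Primrec.const []))
    · intro _ n
      simp only [List.length_map, List.length_range, Option.some.injEq]
      rcases eq_or_ne n 0 with rfl | hn
      · simp
      · rw [if_neg hn, bits_eq n hn, Nat.div2_val]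
        congr 1
        have hlt : n / 2 < n := Nat.div_lt_self (Nat.pos_of_ne_zero hn) one_lt_two
        simp [List.getD, List.getElem?_range hlt]
  simpa using h.comp (Primrec.const ()) Primrec.id

lemma primrec_natToStr : Primrec natToStr :=
  Primrec.list_tail.comp (Primrec.list_reverse.comp (primrec_bits.comp Primrec.succ))

lemma valLE_foldr (l : List Bool) : valLE l = l.foldr (fun b s => b.toNat + 2 * s) 0 := by
  induction l with
  | nil => rfl
  | cons b l ih => simp [valLE, ih]

lemma primrec_toNat : Primrec Bool.toNat := by
  have := Primrec.cond Primrec.id (Primrec.const 1) (Primrec.const 0)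
  exact this.of_eq fun b => by cases b <;> rfl

lemma primrec_valLE : Primrec valLE := by
  have hstep : Primrec₂ (fun (_ : List Bool) (p : Bool × ℕ) => p.1.toNat + 2 * p.2) :=
    Primrec.to₂ (Primrec₂.comp Primrec.nat_add
      (primrec_toNat.comp (Primrec.fst.comp Primrec.snd))
      (Primrec₂.comp Primrec.nat_mul (Primrec.const 2) (Primrec.snd.comp Primrec.snd)))
  have h := Primrec.list_foldr Primrec.id (Primrec.const 0) hstep
  exact h.of_eq fun l => (valLE_foldr l).symm

lemma primrec_strToNat : Primrec strToNat :=
  Primrec.nat_sub.comp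
    (primrec_valLE.comp (Primrec.list_append.comp Primrec.list_reverse
      (Primrec.const [true])))
    (Primrec.const 1)

/-- count of `true`s, computably -/
def cntT (l : List Bool) : ℕ := l.foldr (fun b s => b.toNat + s) 0

lemma cntT_eq (l : List Bool) : cntT l = l.count true := by
  induction l with
  | nil => rfl
  | cons b l ih =>
    cases b <;> simp [cntT, List.count_cons, ih] <;> simp [cntT] at ih <;> omega

lemma primrec_cntT : Primrec cntT := by
  have hstep : Primrec₂ (fun (_ : List Bool) (p : Bool × ℕ) => p.1.toNat + p.2) :=
    Primrec.to₂ (Primrec₂.comp Primrec.nat_add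
      (primrec_toNat.comp (Primrec.fst.comp Primrec.snd))
      (Primrec.snd.comp Primrec.snd))
  have h := Primrec.list_foldr Primrec.id (Primrec.const 0) hstep
  exact h.of_eq fun l => rfl

/-- step-`t` approximation to the characteristic string of length `n` -/
def dApprox (c : Code) (t n : ℕ) : List Bool :=
  (List.range n).map fun i => (evaln t c i).isSome

lemma primrec_dApprox (c : Code) : Primrec₂ (dApprox c) :=
  Primrec.list_map (Primrec.list_range.comp Primrec.snd)
    (Primrec.option_isSome.comp (primrec_evaln.comp
      (((Primrec.fst.comp Primrec.fst).pair (Primrec.const c)).pair Primrec.snd))).to₂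

/-- the decompressor: `p` encodes the number of `true`s among the first `n` entries,
`y` encodes `n`; search for a stage where that many elements have been enumerated. -/
def psiC (c : Code) : List Bool → List Bool → Part (List Bool) :=
  fun p y =>
    (Nat.rfind fun t => Part.some (decide (valLE p ≤ cntT (dApprox c t (strToNat y))))).map
      fun t => dApprox c t (strToNat y)

lemma partrec_psiC (c : Code) : Partrec₂ (psiC c) := by
  have happrox : Primrec fun x : (List Bool × List Bool) × ℕ =>
      dApprox c x.2 (strToNat x.1.2) :=
    (primrec_dApprox c).comp Primrec.snd (primrec_strToNat.comp (Primrec.snd.comp Primrec.fst))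
  have hpredP : Primrec fun x : (List Bool × List Bool) × ℕ =>
      decide (valLE x.1.1 ≤ cntT (dApprox c x.2 (strToNat x.1.2))) :=
    PrimrecPred.decide (PrimrecRel.comp Primrec.nat_le
      (primrec_valLE.comp (Primrec.fst.comp Primrec.fst)) (primrec_cntT.comp happrox))
  have hpred : Partrec₂ fun (x : List Bool × List Bool) (t : ℕ) =>
      (Part.some (decide (valLE x.1 ≤ cntT (dApprox c t (strToNat x.2)))) : Part Bool) :=
    (hpredP.to_comp.partrec).to₂
  have hrf : Partrec fun x : List Bool × List Bool =>
      Nat.rfind fun t => (Part.some (decide (valLE x.1 ≤ cntT (dApprox c t (strToNat x.2)))) :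
        Part Bool) := Partrec.rfind hpred
  have hmap : Computable₂ fun (x : List Bool × List Bool) (t : ℕ) =>
      dApprox c t (strToNat x.2) := happrox.to_comp.to₂
  exact (hrf.map hmap).to₂

end Barzdin

open Nat.Partrec (Code)
open Nat.Partrec.Code in
/-- Barzdin (i): if `L` is recursively enumerable then there is a constant `c` with
`C(λ_{1:n} | n) ≤ log n + c` for all `n`. -/
theorem kc_re_upper (φ : List Bool → List Bool → Part (List Bool))
    (hφ : IsUniversal φ) (L : Language Bool) (hL : REPred (· ∈ L)) :
    ∃ c : ℕ, ∀ n : ℕ,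
      kolC φ (lamPrefix L n) (natToStr n) ≤ (natToStr n).length + c := by
  classical
  -- obtain a code for the semi-decision procedure on indices
  have hF : Partrec fun i : ℕ => Part.assert (natToStr i ∈ L) fun _ => Part.some () :=
    hL.comp primrec_natToStr.to_comp
  obtain ⟨c, hc⟩ := exists_code.1 hF
  have hmem : ∀ i : ℕ, natToStr i ∈ L ↔ ∃ t, (evaln t c i).isSome = true := by
    intro i
    have hdom : (eval c i).Dom ↔ natToStr i ∈ L := by
      rw [hc]
      simp [Part.assert, Encodable.decode_nat]
    constructor
    · intro h
      obtain ⟨x, hx⟩ := Part.dom_iff_mem.1 (hdom.2 h)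
      obtain ⟨t, ht⟩ := evaln_complete.1 hx
      exact ⟨t, Option.isSome_iff_exists.2 ⟨x, ht⟩⟩
    · rintro ⟨t, hs⟩
      obtain ⟨x, hx⟩ := Option.isSome_iff_exists.1 hs
      exact hdom.1 (Part.dom_iff_mem.2 ⟨x, evaln_sound (c := c) (by exact hx)⟩)
  have hDmono : ∀ {t t' i : ℕ}, t ≤ t' →
      (evaln t c i).isSome = true → (evaln t' c i).isSome = true := by
    intro t t' i h hs
    obtain ⟨x, hx⟩ := Option.isSome_iff_exists.1 hs
    exact Option.isSome_iff_exists.2 ⟨x, evaln_mono h (by exact hx)⟩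
  -- pointwise domination
  have hsub : ∀ t n, List.Forall₂ Imp (dApprox c t n) (lamPrefix L n) := by
    intro t n
    unfold dApprox lamPrefix
    apply forall2_maps
    intro i hi
    rw [if_pos ((hmem i).2 ⟨t, hi⟩)]
  -- exhaustion: some stage computes the exact prefix
  have hex : ∀ n, ∃ t, dApprox c t n = lamPrefix L n := by
    intro n
    induction n with
    | zero => exact ⟨0, by simp [dApprox, lamPrefix]⟩
    | succ n ih =>
      obtain ⟨t0, ht0⟩ := ih
      have hstep : ∀ t1, t0 ≤ t1 → dApprox c t1 n = lamPrefix L n := by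
        intro t1 h01
        unfold dApprox lamPrefix at ht0 ⊢
        rw [List.map_inj_left] at ht0 ⊢
        intro i hi
        have ht0i := ht0 i hi
        by_cases hiL : natToStr i ∈ L
        · rw [if_pos hiL]
          rw [if_pos hiL] at ht0i
          exact hDmono h01 ht0i
        · rw [if_neg hiL]
          cases hcase : (evaln t1 c i).isSome
          · rfl
          · exact absurd ((hmem i).2 ⟨t1, hcase⟩) hiL
      by_cases hnL : natToStr n ∈ L
      · obtain ⟨t1, ht1⟩ := (hmem n).1 hnL
        refine ⟨max t0 t1, ?_⟩
        unfold dApprox lamPrefix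
        rw [List.range_succ, List.map_append, List.map_append]
        have h1 := hstep (max t0 t1) (le_max_left _ _)
        unfold dApprox lamPrefix at h1
        refine congrArg₂ (· ++ ·) h1 ?_
        simp only [List.map_cons, List.map_nil]
        rw [if_pos hnL, hDmono (le_max_right t0 t1) ht1]
      · refine ⟨t0, ?_⟩
        unfold dApprox lamPrefix
        rw [List.range_succ, List.map_append, List.map_append]
        unfold dApprox lamPrefix at ht0
        refine congrArg₂ (· ++ ·) ht0 ?_
        have hfalse : (evaln t0 c n).isSome = false := by
          cases hcase : (evaln t0 c n).isSome
          · rfl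
          · exact absurd ((hmem n).2 ⟨t0, hcase⟩) hnL
        simp only [List.map_cons, List.map_nil]
        rw [if_neg hnL, hfalse]
  -- apply universality
  obtain ⟨cU, hcU⟩ := hφ.2 (psiC c) (partrec_psiC c)
  refine ⟨cU + 1, fun n => ?_⟩
  set k := (lamPrefix L n).count true with hk
  have hkn : k ≤ n := le_trans List.count_le_length (by simp [lamPrefix])
  set p := toBits ((natToStr n).length + 1) k with hp
  have hplen : p.length = (natToStr n).length + 1 := toBits_length _ _
  have hvp : valLE p = k := by
    rw [hp, valLE_toBits]
    exact Nat.mod_eq_of_lt (lt_of_le_of_lt hkn (lt_pow_len n))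
  have hxmem : lamPrefix L n ∈ psiC c p (natToStr n) := by
    unfold psiC
    rw [strToNat_natToStr, hvp]
    obtain ⟨t0, ht0⟩ := hex n
    have hpt0 : decide (k ≤ cntT (dApprox c t0 n)) = true := by
      rw [ht0, cntT_eq]
      simp [hk]
    have hdomr : (Nat.rfind fun t =>
        (Part.some (decide (k ≤ cntT (dApprox c t n))) : Part Bool)).Dom :=
      Nat.rfind_dom.2 ⟨t0, by simp [hpt0], fun _ => trivial⟩
    have hmemt := Part.get_mem hdomr
    set t := (Nat.rfind fun t =>
        (Part.some (decide (k ≤ cntT (dApprox c t n))) : Part Bool)).get hdomr with htdef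
    have hspec := Nat.rfind_spec hmemt
    have h1 : k ≤ cntT (dApprox c t n) := by simpa using hspec
    rw [cntT_eq] at h1
    have heq : dApprox c t n = lamPrefix L n := eq_of_count (hsub t n) h1
    have hfinal := Part.mem_map (fun t => dApprox c t n) hmemt
    simpa [heq] using hfinal
  obtain ⟨q, hq, hqlen⟩ := hcU p (natToStr n) _ hxmem
  calc kolC φ (lamPrefix L n) (natToStr n) ≤ q.length := Nat.sInf_le ⟨q, rfl, hq⟩
    _ ≤ p.length + cU := hqlen
    _ = (natToStr n).length + (cU + 1) := by rw [hplen]; ring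
end
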